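/- Let $\mathcal{X} = (\{1,\dots,v\}, \{R_i\}_{i=0}^d)$ be a symmetric association scheme with adjacency matrices $A_0 = I, A_1, \dots, A_d$, and let $A$ be a matrix in the linear span (over $\mathbb{R}$) of $A_0,\dots,A_d$. Then: (1) the characteristic polynomial of $A[\bar{\{x\}}]$ (the principal submatrix omitting one index $x$) is the same for all $x \in \{1,\dots,v\}$; and (2) for each $i \in \{1,\dots,d\}$, the characteristic polynomial of $A[\overline{\{x,y\}}]$ is the same for all pairs $\{x,y\}$ with $(x,y) \in R_i$. -/
import Mathlib


open Matrix Finset Polynomial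

/-- The principal submatrix of `A` with rows and columns indexed by `s`. -/
def principalSub {R : Type*} {n : ℕ} (A : Matrix (Fin n) (Fin n) R)
    (s : Finset (Fin n)) : Matrix s s R :=
  A.submatrix (fun i => (i : Fin n)) (fun i => (i : Fin n))

lemma det_eq_det_principalSub {v : ℕ} (D : Matrix (Fin v) (Fin v) ℝ) (s : Finset (Fin v))
    (h : ∀ j ∈ s, ∀ i, D i j = if i = j then 1 else 0) :
    D.det = (principalSub D sᶜ).det := by
  classical
  let e : {a : Fin v // a ∈ sᶜ} ⊕ {a : Fin v // ¬ a ∈ sᶜ} ≃ Fin v :=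
    Equiv.sumCompl (· ∈ sᶜ)
  have key : D.submatrix e e =
      Matrix.fromBlocks (principalSub D sᶜ) 0
        (Matrix.of fun (i : {a : Fin v // ¬ a ∈ sᶜ}) (j : {a : Fin v // a ∈ sᶜ}) => D i.1 j.1)
        1 := by
    ext i j
    cases i with
    | inl i =>
      cases j with
      | inl j => rfl
      | inr j =>
        have hj : (j : Fin v) ∈ s := by simpa using j.2
        have hij := h j hj i
        have hne : (i : Fin v) ≠ (j : Fin v) := by
          intro hEq
          exact (Finset.mem_compl.mp i.2) (hEq ▸ hj)
        simp [e, hij, hne]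
    | inr i =>
      cases j with
      | inl j => rfl
      | inr j =>
        have hj : (j : Fin v) ∈ s := by simpa using j.2
        have hij := h j hj i
        simp [e, hij, Matrix.one_apply, Subtype.ext_iff]
  calc D.det = (D.submatrix e e).det := (Matrix.det_submatrix_equiv_self e D).symm
  _ = _ := by rw [key, Matrix.det_fromBlocks_zero₁₂, Matrix.det_one, mul_one]

lemma det_principalSub_compl {v : ℕ} (C : Matrix (Fin v) (Fin v) ℝ) (hC : IsUnit C.det)
    (s : Finset (Fin v)) :
    (principalSub C sᶜ).det = C.det * (principalSub C⁻¹ s).det := by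
  classical
  set E : Matrix (Fin v) (Fin v) ℝ :=
    Matrix.of fun i j => if j ∈ s then C⁻¹ i j else (1 : Matrix (Fin v) (Fin v) ℝ) i j with hE
  have hCE : C * E = Matrix.of fun i j =>
      if j ∈ s then (1 : Matrix (Fin v) (Fin v) ℝ) i j else C i j := by
    ext i j
    rcases em (j ∈ s) with hj | hj
    · have h1 : (C * E) i j = (C * C⁻¹) i j := by
        simp only [Matrix.mul_apply, hE, Matrix.of_apply, hj, if_true]
      rw [h1, Matrix.mul_nonsing_inv C hC]
      simp [hj]
    · have h1 : (C * E) i j = ((C * 1 : Matrix (Fin v) (Fin v) ℝ)) i j := by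
        simp only [Matrix.mul_apply, hE, Matrix.of_apply, hj, if_false]
      rw [h1, Matrix.mul_one]
      simp [hj]
  have step1 : (C * E).det = (principalSub C sᶜ).det := by
    rw [det_eq_det_principalSub (C * E) s (by
      intro j hj i
      rw [hCE]
      simp [hj, Matrix.one_apply])]
    congr 1
    ext i j
    have hj : (j : Fin v) ∉ s := Finset.mem_compl.mp j.2
    simp [principalSub, hCE, hj]
  have step2 : E.det = (principalSub C⁻¹ s).det := by
    have h2 : E.det = (principalSub E sᶜᶜ).det := by
      refine det_eq_det_principalSub E sᶜ ?_
      intro j hj i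
      have : (j : Fin v) ∉ s := Finset.mem_compl.mp hj
      simp [hE, this, Matrix.one_apply]
    rw [compl_compl] at h2
    rw [h2]
    congr 1
    ext i j
    have hj : (j : Fin v) ∈ s := j.2
    simp [principalSub, hE, hj]
  rw [← step1, Matrix.det_mul, step2]

lemma eval_charpoly' {n : Type*} [Fintype n] [DecidableEq n] (M : Matrix n n ℝ) (t : ℝ) :
    (M.charpoly).eval t = (t • (1 : Matrix n n ℝ) - M).det := by
  rw [Matrix.charpoly, Polynomial.eval, ← Polynomial.coe_eval₂RingHom, RingHom.map_det]
  congr 1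
  ext i j
  by_cases h : i = j
  · subst h
    simp [Matrix.charmatrix_apply_eq, Matrix.one_apply, Matrix.sub_apply, Matrix.smul_apply]
  · simp [Matrix.charmatrix_apply_ne _ _ _ h, Matrix.one_apply, h, Matrix.sub_apply,
      Matrix.smul_apply]

lemma eval_charpoly_principalSub {v : ℕ} (B : Matrix (Fin v) (Fin v) ℝ) (s : Finset (Fin v))
    (t : ℝ) :
    ((principalSub B s).charpoly).eval t
      = (principalSub (t • (1 : Matrix (Fin v) (Fin v) ℝ) - B) s).det := by
  rw [eval_charpoly']
  congr 1
  ext i j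
  by_cases h : i = j
  · subst h
    simp [principalSub, Matrix.sub_apply, Matrix.smul_apply, Matrix.one_apply]
  · have hne : (i : Fin v) ≠ (j : Fin v) := fun he => h (Subtype.ext he)
    simp [principalSub, Matrix.sub_apply, Matrix.smul_apply, Matrix.one_apply, h, hne]

lemma entry_determined {v d : ℕ} {A : Fin (d + 1) → Matrix (Fin v) (Fin v) ℝ}
    (h01 : ∀ i x y, A i x y = 0 ∨ A i x y = 1)
    (hsum : ∑ i, A i = Matrix.of fun _ _ => (1 : ℝ))
    {i : Fin (d + 1)} {x y : Fin v} (hxy : A i x y = 1) (k : Fin (d + 1)) :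
    A k x y = if k = i then 1 else 0 := by
  classical
  have hs : ∑ k, A k x y = 1 := by
    have := congrFun (congrFun hsum x) y
    simpa [Matrix.sum_apply] using this
  have hrest : ∑ k ∈ Finset.univ.erase i, A k x y = 0 := by
    have h := Finset.add_sum_erase Finset.univ (fun k => A k x y) (Finset.mem_univ i)
    rw [← h] at hs
    simp only [hxy] at hs
    linarith
  by_cases hk : k = i
  · simp [hk, hxy]
  · have hnonneg : ∀ j ∈ Finset.univ.erase i, 0 ≤ A j x y := by
      intro j _
      rcases h01 j x y with h | h <;> simp [h]
    have := (Finset.sum_eq_zero_iff_of_nonneg hnonneg).mp hrest k (by simp [hk])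
    simp [hk, this]

lemma span_entry_eq {v d : ℕ} {A : Fin (d + 1) → Matrix (Fin v) (Fin v) ℝ}
    (h01 : ∀ i x y, A i x y = 0 ∨ A i x y = 1)
    (hsum : ∑ i, A i = Matrix.of fun _ _ => (1 : ℝ))
    {M : Matrix (Fin v) (Fin v) ℝ} (hM : M ∈ Submodule.span ℝ (Set.range A))
    {i : Fin (d + 1)} {x y x' y' : Fin v} (hxy : A i x y = 1) (hxy' : A i x' y' = 1) :
    M x y = M x' y' := by
  induction hM using Submodule.span_induction with
  | mem m hm =>
    obtain ⟨k, rfl⟩ := hm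
    rw [entry_determined h01 hsum hxy k, entry_determined h01 hsum hxy' k]
  | zero => simp
  | add a b _ _ ha hb => simp [Matrix.add_apply, ha, hb]
  | smul r a _ ha => simp [Matrix.smul_apply, ha]

lemma inv_mem_subalgebra {v : ℕ} (S : Subalgebra ℝ (Matrix (Fin v) (Fin v) ℝ))
    (C : Matrix (Fin v) (Fin v) ℝ) (hC : C ∈ S) (h : IsUnit C.det) : C⁻¹ ∈ S := by
  classical
  have hch := Matrix.aeval_self_charpoly C
  set p := C.charpoly with hp
  have h0 : p.coeff 0 ≠ 0 := by
    intro hz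
    have hd := Matrix.det_eq_sign_charpoly_coeff C
    rw [← hp, hz, mul_zero] at hd
    exact h.ne_zero hd
  have key : aeval C (divX p) * C + (p.coeff 0) • (1 : Matrix (Fin v) (Fin v) ℝ) = 0 := by
    have h2 := congrArg (aeval C) (divX_mul_X_add p)
    rw [map_add, _root_.map_mul, aeval_X, aeval_C, hch, Algebra.algebraMap_eq_smul_one] at h2
    exact h2
  have hmain : aeval C (divX p) * C = (-(p.coeff 0)) • (1 : Matrix (Fin v) (Fin v) ℝ) := by
    rw [neg_smul]
    linear_combination (norm := module) key
  set D := (-(p.coeff 0))⁻¹ • aeval C (divX p) with hD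
  have hCD : C * D = 1 := by
    have hcomm : C * aeval C (divX p) = aeval C (divX p) * C := by
      rw [show C * aeval C p.divX = aeval C (X * p.divX) by rw [_root_.map_mul, aeval_X],
        mul_comm X, _root_.map_mul, aeval_X]
    rw [hD, Matrix.mul_smul, hcomm, hmain, smul_smul,
      inv_mul_cancel₀ (neg_ne_zero.mpr h0), one_smul]
  rw [Matrix.inv_eq_right_inv hCD, hD]
  refine S.smul_mem ?_ _
  have hadj : Algebra.adjoin ℝ {C} ≤ S := Algebra.adjoin_le (by simpa using hC)
  exact hadj (Polynomial.aeval_mem_adjoin_singleton ℝ C)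

lemma det_principalSub_singleton {v : ℕ} (N : Matrix (Fin v) (Fin v) ℝ) (x : Fin v) :
    (principalSub N {x}).det = N x x := by
  haveI : Unique (({x} : Finset (Fin v)) : Type) :=
    ⟨⟨⟨x, Finset.mem_singleton_self x⟩⟩, fun a => Subtype.ext (Finset.mem_singleton.mp a.2)⟩
  rw [Matrix.det_unique]
  have hd : ((default : (({x} : Finset (Fin v)) : Type)) : Fin v) = x :=
    Finset.mem_singleton.mp (default : (({x} : Finset (Fin v)) : Type)).2
  simp only [principalSub, Matrix.submatrix_apply, hd]

lemma det_principalSub_pair {v : ℕ} (N : Matrix (Fin v) (Fin v) ℝ) {x y : Fin v} (hxy : x ≠ y) :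
    (principalSub N {x, y}).det = N x x * N y y - N x y * N y x := by
  classical
  have hx : x ∈ ({x, y} : Finset (Fin v)) := by simp
  have hy : y ∈ ({x, y} : Finset (Fin v)) := by simp
  let e : Fin 2 ≃ (({x, y} : Finset (Fin v)) : Type) :=
    { toFun := ![⟨x, hx⟩, ⟨y, hy⟩]
      invFun := fun z => if (z : Fin v) = x then 0 else 1
      left_inv := by
        intro a
        fin_cases a
        · simp
        · simp [Ne.symm hxy]
      right_inv := by
        intro z
        rcases Finset.mem_insert.mp z.2 with h | h
        · simp only [h, if_pos]
          exact Subtype.ext h.symm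
        · have hz : (z : Fin v) = y := Finset.mem_singleton.mp h
          have : (z : Fin v) ≠ x := by rw [hz]; exact Ne.symm hxy
          simp only [if_neg this]
          simp only [Matrix.cons_val_one, Matrix.head_cons]
          exact Subtype.ext hz.symm }
  rw [← Matrix.det_submatrix_equiv_self e (principalSub N {x, y}), Matrix.det_fin_two]
  simp [e, principalSub]

/-- Let `A 0 = I, A 1, …, A d` be the adjacency matrices of a symmetric association
scheme and let `B` be an element of its Bose–Mesner algebra (the span of the `A i`).
Then (1) the characteristic polynomial of the principal submatrix of `B` omitting one
index is independent of that index, and (2) for each class `i`, the characteristic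
polynomial of the principal submatrix of `B` omitting a pair `{x,y}` with `(x,y) ∈ Rᵢ`
depends only on `i`. -/
theorem bose_mesner_charpoly_principal {v d : ℕ}
    (A : Fin (d + 1) → Matrix (Fin v) (Fin v) ℝ)
    (hA0 : A 0 = 1)
    (hsym : ∀ i, (A i)ᵀ = A i)
    (h01 : ∀ i x y, A i x y = 0 ∨ A i x y = 1)
    (hsum : ∑ i, A i = Matrix.of fun _ _ => (1 : ℝ))
    (hmul : ∀ i j, A i * A j ∈ Submodule.span ℝ (Set.range A))
    (B : Matrix (Fin v) (Fin v) ℝ)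
    (hB : B ∈ Submodule.span ℝ (Set.range A)) :
    (∀ x y : Fin v,
      (principalSub B ({x} : Finset (Fin v))ᶜ).charpoly =
        (principalSub B ({y} : Finset (Fin v))ᶜ).charpoly) ∧
    (∀ i : Fin (d + 1), i ≠ 0 →
      ∀ x y x' y' : Fin v, A i x y = 1 → A i x' y' = 1 →
        (principalSub B ({x, y} : Finset (Fin v))ᶜ).charpoly =
          (principalSub B ({x', y'} : Finset (Fin v))ᶜ).charpoly) := by
  classical
  set S := Submodule.span ℝ (Set.range A) with hS
  have hone : (1 : Matrix (Fin v) (Fin v) ℝ) ∈ S := hA0 ▸ Submodule.subset_span ⟨0, rfl⟩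
  have hmulmem : ∀ x y, x ∈ S → y ∈ S → x * y ∈ S := by
    intro a b ha hb
    have hle : S * S ≤ S := by
      rw [hS, Submodule.span_mul_span]
      refine Submodule.span_le.mpr ?_
      intro z hz
      rw [Set.mem_mul] at hz
      obtain ⟨m, hm, n, hn, rfl⟩ := hz
      obtain ⟨i, rfl⟩ := hm
      obtain ⟨j, rfl⟩ := hn
      exact hmul i j
    exact hle (Submodule.mul_mem_mul ha hb)
  have hNmem : ∀ t : ℝ, (t • (1 : Matrix (Fin v) (Fin v) ℝ) - B).det ≠ 0 →
      (t • (1 : Matrix (Fin v) (Fin v) ℝ) - B)⁻¹ ∈ S := by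
    intro t ht
    exact inv_mem_subalgebra (S.toSubalgebra hone hmulmem) _
      (Submodule.sub_mem S (Submodule.smul_mem S t hone) hB) (isUnit_iff_ne_zero.mpr ht)
  have cof : {t : ℝ | (t • (1 : Matrix (Fin v) (Fin v) ℝ) - B).det ≠ 0}.Infinite := by
    have hne : B.charpoly ≠ 0 := B.charpoly_monic.ne_zero
    have hfin : {t : ℝ | (B.charpoly).IsRoot t}.Finite := Polynomial.finite_setOf_isRoot hne
    have hsub : {t : ℝ | (t • (1 : Matrix (Fin v) (Fin v) ℝ) - B).det = 0} ⊆
        {t : ℝ | (B.charpoly).IsRoot t} := by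
      intro t ht
      simp only [Set.mem_setOf_eq, Polynomial.IsRoot]
      rw [eval_charpoly']
      exact ht
    have hfin2 : {t : ℝ | (t • (1 : Matrix (Fin v) (Fin v) ℝ) - B).det = 0}.Finite :=
      hfin.subset hsub
    simpa [Set.compl_setOf] using hfin2.infinite_compl
  have conclude : ∀ s1 s2 : Finset (Fin v),
      (∀ t : ℝ, (t • (1 : Matrix (Fin v) (Fin v) ℝ) - B).det ≠ 0 →
        (principalSub (t • (1 : Matrix (Fin v) (Fin v) ℝ) - B)⁻¹ s1).det =
          (principalSub (t • (1 : Matrix (Fin v) (Fin v) ℝ) - B)⁻¹ s2).det) →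
      (principalSub B s1ᶜ).charpoly = (principalSub B s2ᶜ).charpoly := by
    intro s1 s2 h
    apply Polynomial.eq_of_infinite_eval_eq
    refine cof.mono ?_
    intro t ht
    simp only [Set.mem_setOf_eq] at ht ⊢
    rw [eval_charpoly_principalSub, eval_charpoly_principalSub,
      det_principalSub_compl _ (isUnit_iff_ne_zero.mpr ht) s1,
      det_principalSub_compl _ (isUnit_iff_ne_zero.mpr ht) s2, h t ht]
  have hdiag : ∀ z : Fin v, A 0 z z = 1 := by
    intro z
    rw [hA0]
    exact Matrix.one_apply_eq z
  constructor
  · intro x y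
    apply conclude
    intro t ht
    rw [det_principalSub_singleton, det_principalSub_singleton]
    exact span_entry_eq h01 hsum (hNmem t ht) (hdiag x) (hdiag y)
  · intro i hi x y x' y' hxy hxy'
    have hne : ∀ {a b : Fin v}, A i a b = 1 → a ≠ b := by
      intro a b hab hEq
      subst hEq
      have h := entry_determined h01 hsum (hdiag a) i
      rw [if_neg hi, hab] at h
      norm_num at h
    have hyx : A i y x = 1 := by
      rw [← hsym i]
      simpa using hxy
    have hyx' : A i y' x' = 1 := by
      rw [← hsym i]
      simpa using hxy'
    apply conclude
    intro t ht
    have hN := hNmem t ht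
    rw [det_principalSub_pair _ (hne hxy), det_principalSub_pair _ (hne hxy'),
      span_entry_eq h01 hsum hN (hdiag x) (hdiag x'),
      span_entry_eq h01 hsum hN (hdiag y) (hdiag y'),
      span_entry_eq h01 hsum hN hxy hxy',
      span_entry_eq h01 hsum hN hyx hyx']
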